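/- For every subexcedent function u of size n, the sorting algorithm φ1 terminates, and its output φ1(u) = (v,w) is a decreasing subexcedent function v of size n together with a valid weight w for v. -/

import Mathlib

open scoped Classical
noncomputable section

/-- A subexcedent function of size `n`: `u j ≤ n - j` for `j ∈ [1,n]`, `u` vanishing
outside of `[1,n]`. -/
def IsSubexc (n : ℕ) (u : ℕ → ℕ) : Prop :=
  (∀ j, 1 ≤ j → j ≤ n → u j ≤ n - j) ∧ ∀ j, j = 0 ∨ n < j → u j = 0
/-- A subexcedent function is decreasing if its nonzero values decrease strictly. -/
def IsDecr (n : ℕ) (u : ℕ → ℕ) : Prop :=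
  ∀ i j, 1 ≤ i → i < j → j ≤ n → 0 < u i → 0 < u j → u j < u i
/-- Maximal allowed weight at position `k` for a decreasing subexcedent function `u`:
the number of positions `i < k` with `0 < u i ≤ n - k`. -/
def maxW (n : ℕ) (u : ℕ → ℕ) (k : ℕ) : ℕ :=
  ((Finset.Ico 1 k).filter (fun i => 0 < u i ∧ u i ≤ n - k)).card
/-- A valid weight for a decreasing subexcedent function. -/
def IsValidW (n : ℕ) (u w : ℕ → ℕ) : Prop :=
  (∀ k, 1 ≤ k → k ≤ n → w k ≤ maxW n u k) ∧ ∀ k, k = 0 ∨ n < k → w k = 0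
/-- Positions `k` of `u` having a smaller or equal nonzero value to their left;
the pivot of the sorting algorithm is the largest value at such positions. -/
def pivotPositions (n : ℕ) (u : ℕ → ℕ) : Finset ℕ :=
  (Finset.Icc 1 n).filter (fun k => ∃ j, 1 ≤ j ∧ j < k ∧ 0 < u j ∧ u j ≤ u k)
/-- One exchange of the sorting algorithm φ₁: the pivot `p` is the greatest value of `u`
having an occurrence with a smaller or equal nonzero value to its left, `k` is the
position of its rightmost occurrence, `i` is the position of the rightmost occurrence of
the largest value `≤ p` to the left of `k`; `u i` is decremented then `u i, u k` are
swapped and `w k` is incremented.  Returns `none` when no pivot exists. -/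
def phi1Step (n : ℕ) (s : (ℕ → ℕ) × (ℕ → ℕ)) : Option ((ℕ → ℕ) × (ℕ → ℕ)) :=
  if (pivotPositions n s.1).Nonempty then
    let p := ((pivotPositions n s.1).image s.1).sup id
    let k := ((Finset.Icc 1 n).filter (fun x => s.1 x = p)).sup id
    let m := (((Finset.Ico 1 k).filter (fun j => 0 < s.1 j ∧ s.1 j ≤ p)).image s.1).sup id
    let i := ((Finset.Ico 1 k).filter (fun j => s.1 j = m)).sup id
    some (Function.update (Function.update s.1 i (s.1 k)) k (s.1 i - 1),
      Function.update s.2 k (s.2 k + 1))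
  else none
/-- Iterate `phi1Step` at most `m` times, stopping when no pivot exists. -/
def phi1Iter (n : ℕ) : ℕ → (ℕ → ℕ) × (ℕ → ℕ) → (ℕ → ℕ) × (ℕ → ℕ)
  | 0, s => s
  | m + 1, s =>
    match phi1Step n s with
    | none => s
    | some s' => phi1Iter n m s'
/-- The map φ₁: run the sorting algorithm starting from `(u, 0)`.  Each exchange
decreases `∑ u` by exactly one, so `∑ u + 1` iterations always suffice to reach the
final state. -/
def phi1 (n : ℕ) (u : ℕ → ℕ) : (ℕ → ℕ) × (ℕ → ℕ) :=
  phi1Iter n ((∑ j ∈ Finset.Icc 1 n, u j) + 1) (u, fun _ => 0)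


/-! ### Auxiliary machinery for the proof -/

lemma sup_id_mem (S : Finset ℕ) (h : S.Nonempty) : S.sup id ∈ S := by
  obtain ⟨a, ha, hmax⟩ := Finset.exists_max_image S id h
  have hs : S.sup id = a :=
    le_antisymm (Finset.sup_le fun b hb => hmax b hb) (Finset.le_sup (f := id) ha)
  rwa [hs]

lemma sum_update2 (S : Finset ℕ) (u : ℕ → ℕ) {i k : ℕ} (hi : i ∈ S) (hk : k ∈ S)
    (hik : i ≠ k) (hpos : 0 < u i) :
    (∑ j ∈ S, (Function.update (Function.update u i (u k)) k (u i - 1)) j) + 1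
      = ∑ j ∈ S, u j := by
  classical
  rw [Finset.sum_update_of_mem hk, Finset.sdiff_singleton_eq_erase,
    Finset.sum_update_of_mem (Finset.mem_erase.mpr ⟨hik, hi⟩), Finset.sdiff_singleton_eq_erase]
  have h1 : ∑ j ∈ S, u j = u k + ∑ j ∈ S.erase k, u j := (Finset.add_sum_erase S u hk).symm
  have h2 : ∑ j ∈ S.erase k, u j = u i + ∑ j ∈ (S.erase k).erase i, u j :=
    (Finset.add_sum_erase _ u (Finset.mem_erase.mpr ⟨hik, hi⟩)).symm
  rw [h1, h2]; omega

/-- The current pivot value (0 if there is no pivot). -/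
def pv (n : ℕ) (u : ℕ → ℕ) : ℕ := ((pivotPositions n u).image u).sup id

/-- The set of values appearing left of `k` that are in `(u k, n-k]`, and `≥` the current
pivot value.  The number of such (distinct) values bounds the weight at `k`. -/
def capSet (n : ℕ) (u : ℕ → ℕ) (k : ℕ) : Finset ℕ :=
  ((Finset.Ico 1 k).filter
    (fun i => 0 < u i ∧ u i ≤ n - k ∧ pv n u ≤ u i ∧ u k < u i)).image u

lemma mem_pivotPositions {n x : ℕ} {u : ℕ → ℕ} :
    x ∈ pivotPositions n u ↔
      (1 ≤ x ∧ x ≤ n) ∧ ∃ j, 1 ≤ j ∧ j < x ∧ 0 < u j ∧ u j ≤ u x := by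
  simp [pivotPositions, Finset.mem_filter, Finset.mem_Icc]

lemma mem_capSet {n k val : ℕ} {u : ℕ → ℕ} :
    val ∈ capSet n u k ↔
      ∃ j, (1 ≤ j ∧ j < k) ∧ (0 < u j ∧ u j ≤ n - k ∧ pv n u ≤ u j ∧ u k < u j) ∧
        u j = val := by
  simp [capSet, Finset.mem_image, Finset.mem_filter, Finset.mem_Ico, and_assoc]

lemma step_spec (n : ℕ) (u w : ℕ → ℕ) (hu : IsSubexc n u)
    (hw : ∀ k, w k ≤ (capSet n u k).card)
    (hne : (pivotPositions n u).Nonempty) :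
    ∃ u' w', phi1Step n (u, w) = some (u', w') ∧ IsSubexc n u' ∧
      (∀ k, w' k ≤ (capSet n u' k).card) ∧
      (∀ k, k = 0 ∨ n < k → w' k = w k) ∧
      (∑ j ∈ Finset.Icc 1 n, u' j) + 1 = ∑ j ∈ Finset.Icc 1 n, u j := by
  classical
  set p := ((pivotPositions n u).image u).sup id with hp_def
  set k := ((Finset.Icc 1 n).filter (fun x => u x = p)).sup id with hk_def
  set m := (((Finset.Ico 1 k).filter (fun j => 0 < u j ∧ u j ≤ p)).image u).sup id with hm_def
  set i := ((Finset.Ico 1 k).filter (fun j => u j = m)).sup id with hi_def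
  have hpv : pv n u = p := hp_def.symm
  -- basic facts about p
  have hpmem : p ∈ (pivotPositions n u).image u := sup_id_mem _ (hne.image u)
  obtain ⟨k₀, hk₀P, hk₀p⟩ := Finset.mem_image.mp hpmem
  have hple : ∀ x ∈ pivotPositions n u, u x ≤ p := fun x hx =>
    Finset.le_sup (f := id) (Finset.mem_image_of_mem u hx)
  obtain ⟨⟨hk₀1, hk₀n⟩, j₀, hj₀1, hj₀lt, hj₀pos, hj₀le⟩ := mem_pivotPositions.mp hk₀P
  have hppos : 0 < p := hk₀p ▸ (hj₀pos.trans_le hj₀le)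
  -- basic facts about k
  have hSne : ((Finset.Icc 1 n).filter (fun x => u x = p)).Nonempty :=
    ⟨k₀, Finset.mem_filter.mpr ⟨Finset.mem_Icc.mpr ⟨hk₀1, hk₀n⟩, hk₀p⟩⟩
  have hkmem := sup_id_mem _ hSne
  rw [← hk_def] at hkmem
  obtain ⟨hkIcc, hkp⟩ := Finset.mem_filter.mp hkmem
  obtain ⟨hk1, hkn⟩ := Finset.mem_Icc.mp hkIcc
  have hkmax : ∀ x, 1 ≤ x → x ≤ n → u x = p → x ≤ k := by
    intro x h1 h2 h3
    exact Finset.le_sup (f := id)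
      (Finset.mem_filter.mpr ⟨Finset.mem_Icc.mpr ⟨h1, h2⟩, h3⟩)
  have hk₀k : k₀ ≤ k := hkmax k₀ hk₀1 hk₀n hk₀p
  have hj₀k : j₀ < k := lt_of_lt_of_le hj₀lt hk₀k
  -- basic facts about m
  have hTne : ((Finset.Ico 1 k).filter (fun j => 0 < u j ∧ u j ≤ p)).Nonempty :=
    ⟨j₀, Finset.mem_filter.mpr ⟨Finset.mem_Ico.mpr ⟨hj₀1, hj₀k⟩,
      hj₀pos, hk₀p ▸ hj₀le⟩⟩
  have hmmem := sup_id_mem _ (hTne.image u)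
  rw [← hm_def] at hmmem
  obtain ⟨j₁, hj₁T, hj₁m⟩ := Finset.mem_image.mp hmmem
  obtain ⟨hj₁Ico, hj₁pos, hj₁le⟩ := Finset.mem_filter.mp hj₁T
  obtain ⟨hj₁1, hj₁k⟩ := Finset.mem_Ico.mp hj₁Ico
  have hmpos : 0 < m := hj₁m ▸ hj₁pos
  have hmlep : m ≤ p := hj₁m ▸ hj₁le
  have hmmax : ∀ j, 1 ≤ j → j < k → 0 < u j → u j ≤ p → u j ≤ m := by
    intro j h1 h2 h3 h4
    exact Finset.le_sup (f := id) (Finset.mem_image_of_mem u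
      (Finset.mem_filter.mpr ⟨Finset.mem_Ico.mpr ⟨h1, h2⟩, h3, h4⟩))
  -- basic facts about i
  have hT'ne : ((Finset.Ico 1 k).filter (fun j => u j = m)).Nonempty :=
    ⟨j₁, Finset.mem_filter.mpr ⟨hj₁Ico, hj₁m⟩⟩
  have himem := sup_id_mem _ hT'ne
  rw [← hi_def] at himem
  obtain ⟨hiIco, him⟩ := Finset.mem_filter.mp himem
  obtain ⟨hi1, hik⟩ := Finset.mem_Ico.mp hiIco
  have hine : i ≠ k := ne_of_lt hik
  have himax : ∀ j, 1 ≤ j → j < k → u j = m → j ≤ i := by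
    intro j h1 h2 h3
    exact Finset.le_sup (f := id)
      (Finset.mem_filter.mpr ⟨Finset.mem_Ico.mpr ⟨h1, h2⟩, h3⟩)
  -- the new state
  set u' := Function.update (Function.update u i (u k)) k (u i - 1) with hu'_def
  set w' := Function.update w k (w k + 1) with hw'_def
  have hu'val : ∀ j, u' j = if j = k then m - 1 else if j = i then p else u j := by
    intro j
    rw [hu'_def]
    by_cases h1 : j = k
    · subst h1; simp [Function.update_apply, him]
    · by_cases h2 : j = i
      · subst h2; simp [Function.update_apply, hine, hkp]
      · simp [Function.update_apply, h1, h2]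
  have hw'val : ∀ j, w' j = if j = k then w k + 1 else w j := by
    intro j; rw [hw'_def]; simp [Function.update_apply]
  refine ⟨u', w', ?_, ?_, ?_, ?_, ?_⟩
  · -- the step equation
    rw [phi1Step]
    rw [if_pos hne]
  · -- subexcedence
    constructor
    · intro j h1 h2
      rw [hu'val j]
      by_cases hj1 : j = k
      · rw [if_pos hj1]
        have h5 : u k ≤ n - k := hu.1 k hk1 hkn
        rw [hkp] at h5
        have h6 : n - k ≤ n - j := by rw [hj1]
        omega
      · rw [if_neg hj1]
        by_cases hj2 : j = i
        · rw [if_pos hj2]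
          have h3 : u k ≤ n - k := hu.1 k hk1 hkn
          rw [hkp] at h3
          have h4 : n - k ≤ n - j := by
            rw [hj2]; exact Nat.sub_le_sub_left (le_of_lt hik) n
          exact h3.trans h4
        · rw [if_neg hj2]; exact hu.1 j h1 h2
    · intro j hj
      rw [hu'val j]
      have hj1 : j ≠ k := by rcases hj with h | h <;> omega
      have hj2 : j ≠ i := by
        have : i ≤ n := le_of_lt (lt_of_lt_of_le hik hkn)
        rcases hj with h | h <;> omega
      rw [if_neg hj1, if_neg hj2]
      exact hu.2 j hj
  · -- the weights
    -- first: the new pivot value is at most p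
    have hpv' : pv n u' ≤ p := by
      rw [pv]
      apply Finset.sup_le
      intro b hb
      obtain ⟨x, hx, rfl⟩ := Finset.mem_image.mp hb
      show u' x ≤ p
      rw [hu'val x]
      by_cases hx1 : x = k
      · rw [if_pos hx1]; omega
      · rw [if_neg hx1]
        by_cases hx2 : x = i
        · rw [if_pos hx2]
        · rw [if_neg hx2]
          by_contra hcon
          push_neg at hcon
          obtain ⟨⟨hx1', hxn⟩, j, hj1, hjx, hjpos, hjle⟩ := mem_pivotPositions.mp hx
          rw [hu'val x, if_neg hx1, if_neg hx2] at hjle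
          have hxP : x ∈ pivotPositions n u := by
            rw [mem_pivotPositions]
            refine ⟨⟨hx1', hxn⟩, ?_⟩
            rw [hu'val j] at hjpos hjle
            by_cases hjk : j = k
            · rw [hjk] at hjx hj1
              refine ⟨k, hj1, hjx, ?_, ?_⟩
              · rw [hkp]; exact hppos
              · rw [hkp]; exact le_of_lt hcon
            · rw [if_neg hjk] at hjpos hjle
              by_cases hji : j = i
              · rw [hji] at hjx hj1
                refine ⟨i, hj1, hjx, ?_, ?_⟩
                · rw [him]; exact hmpos
                · rw [him]; exact hmlep.trans (le_of_lt hcon)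
              · rw [if_neg hji] at hjpos hjle
                exact ⟨j, hj1, hjx, hjpos, hjle⟩
          exact absurd (hple x hxP) (not_le.mpr hcon)
    -- inclusion of the cap sets away from k
    have hVsub : ∀ kk, kk ≠ k → capSet n u kk ⊆ capSet n u' kk := by
      intro kk hkkne val hval
      rw [mem_capSet] at hval ⊢
      obtain ⟨j, ⟨hj1, hjkk⟩, ⟨hjpos, hjle, hjpv, hjgt⟩, rfl⟩ := hval
      rw [hpv] at hjpv
      rcases lt_or_eq_of_le hjpv with hplt | hpeq
      · -- u j > p : position j is untouched
        have hji : j ≠ i := by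
          intro h; rw [h, him] at hplt; omega
        have hjk : j ≠ k := by
          intro h; rw [h, hkp] at hplt; omega
        refine ⟨j, ⟨hj1, hjkk⟩, ?_, ?_⟩
        · rw [hu'val j, if_neg hjk, if_neg hji]
          refine ⟨hjpos, hjle, le_trans hpv' (le_of_lt hplt), ?_⟩
          rw [hu'val kk, if_neg hkkne]
          by_cases hkki : kk = i
          · rw [if_pos hkki]; exact hplt
          · rw [if_neg hkki]; exact hjgt
        · rw [hu'val j, if_neg hjk, if_neg hji]
      · -- u j = p
        have hupj : u j = p := hpeq.symm
        have hjn : j ≤ n := by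
          by_contra hcon
          have := hu.2 j (Or.inr (by omega))
          omega
        have hjlek : j ≤ k := hkmax j hj1 hjn hupj
        rcases eq_or_lt_of_le hjlek with hjeqk | hjltk
        · -- j = k < kk : use position i as the witness
          have hkltkk : k < kk := hjeqk ▸ hjkk
          refine ⟨i, ⟨hi1, lt_trans hik hkltkk⟩, ?_, ?_⟩
          · rw [hu'val i, if_neg hine, if_pos rfl]
            refine ⟨hppos, hupj ▸ hjle, hpv', ?_⟩
            rw [hu'val kk, if_neg hkkne, if_neg (by omega : kk ≠ i)]
            exact lt_of_lt_of_le hjgt (le_of_eq hupj)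
          · rw [hu'val i, if_neg hine, if_pos rfl]; exact hupj.symm
        · -- j < k : then m = p and j ≤ i
          have hmp : m = p := le_antisymm hmlep
            (hupj ▸ hmmax j hj1 hjltk hjpos (le_of_eq hupj))
          have hjm : u j = m := by rw [hupj, hmp]
          have hjlei : j ≤ i := himax j hj1 hjltk hjm
          rcases lt_trichotomy kk i with hkki | hkki | hkki
          · -- kk < i : witness j, untouched
            have hji : j ≠ i := by omega
            have hjk : j ≠ k := by omega
            refine ⟨j, ⟨hj1, hjkk⟩, ?_, ?_⟩
            · rw [hu'val j, if_neg hjk, if_neg hji]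
              refine ⟨hjpos, hjle, le_trans hpv' (le_of_eq hpeq), ?_⟩
              rw [hu'val kk, if_neg hkkne, if_neg (by omega : kk ≠ i)]
              exact hjgt
            · rw [hu'val j, if_neg hjk, if_neg hji]
          · -- kk = i : impossible
            exfalso
            rw [hkki, him, hupj] at hjgt
            omega
          · -- i < kk : witness i
            refine ⟨i, ⟨hi1, hkki⟩, ?_, ?_⟩
            · rw [hu'val i, if_neg hine, if_pos rfl]
              refine ⟨hppos, hupj ▸ hjle, hpv', ?_⟩
              rw [hu'val kk, if_neg hkkne, if_neg (by omega : kk ≠ i)]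
              exact hupj ▸ hjgt
            · rw [hu'val i, if_neg hine, if_pos rfl]; exact hupj.symm
    -- at k the cap set grows strictly
    have hpnot : p ∉ capSet n u k := by
      rw [mem_capSet]
      rintro ⟨j, _, ⟨_, _, _, hjgt⟩, hjp⟩
      rw [hkp, hjp] at hjgt
      omega
    have hVk : insert p (capSet n u k) ⊆ capSet n u' k := by
      intro val hval
      rcases Finset.mem_insert.mp hval with rfl | hval
      · rw [mem_capSet]
        refine ⟨i, ⟨hi1, hik⟩, ?_, ?_⟩
        · rw [hu'val i, if_neg hine, if_pos rfl]
          refine ⟨hppos, hkp ▸ hu.1 k hk1 hkn, hpv', ?_⟩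
          rw [hu'val k, if_pos rfl]
          omega
        · rw [hu'val i, if_neg hine, if_pos rfl]
      · rw [mem_capSet] at hval ⊢
        obtain ⟨j, ⟨hj1, hjk⟩, ⟨hjpos, hjle, hjpv, hjgt⟩, rfl⟩ := hval
        rw [hpv] at hjpv
        rw [hkp] at hjgt
        have hji : j ≠ i := by
          intro h; rw [h, him] at hjgt; omega
        have hjkne : j ≠ k := ne_of_lt hjk
        refine ⟨j, ⟨hj1, hjk⟩, ?_, ?_⟩
        · rw [hu'val j, if_neg hjkne, if_neg hji]
          refine ⟨hjpos, hjle, le_trans hpv' (le_of_lt hjgt), ?_⟩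
          rw [hu'val k, if_pos rfl]
          omega
        · rw [hu'val j, if_neg hjkne, if_neg hji]
    -- conclude
    intro kk
    rw [hw'val kk]
    by_cases hkkk : kk = k
    · rw [if_pos hkkk, hkkk]
      have h1 := hw k
      calc w k + 1 ≤ (capSet n u k).card + 1 := by omega
        _ = (insert p (capSet n u k)).card := (Finset.card_insert_of_notMem hpnot).symm
        _ ≤ (capSet n u' k).card := Finset.card_le_card hVk
    · rw [if_neg hkkk]
      exact (hw kk).trans (Finset.card_le_card (hVsub kk hkkk))
  · -- weights unchanged outside
    intro kk hkk
    rw [hw'val kk, if_neg (by rcases hkk with h | h <;> omega : kk ≠ k)]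
  · -- the sum decreases
    exact sum_update2 (Finset.Icc 1 n) u (Finset.mem_Icc.mpr ⟨hi1, le_of_lt (lt_of_lt_of_le hik hkn)⟩)
      (Finset.mem_Icc.mpr ⟨hk1, hkn⟩) hine (him ▸ hmpos)



lemma step_none_of_empty (n : ℕ) (s : (ℕ → ℕ) × (ℕ → ℕ))
    (h : ¬(pivotPositions n s.1).Nonempty) : phi1Step n s = none := by
  rw [phi1Step, if_neg h]

lemma empty_of_step_none (n : ℕ) (s : (ℕ → ℕ) × (ℕ → ℕ))
    (h : phi1Step n s = none) : ¬(pivotPositions n s.1).Nonempty := by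
  intro hne
  rw [phi1Step, if_pos hne] at h
  simp at h

lemma sum_pos_of_nonempty (n : ℕ) (u : ℕ → ℕ)
    (hne : (pivotPositions n u).Nonempty) : 0 < ∑ j ∈ Finset.Icc 1 n, u j := by
  obtain ⟨k₀, hk₀⟩ := hne
  obtain ⟨⟨hk₀1, hk₀n⟩, j₀, hj₀1, hj₀lt, hj₀pos, _⟩ := mem_pivotPositions.mp hk₀
  have hj₀mem : j₀ ∈ Finset.Icc 1 n := Finset.mem_Icc.mpr ⟨hj₀1, by omega⟩
  calc 0 < u j₀ := hj₀pos
    _ ≤ ∑ j ∈ Finset.Icc 1 n, u j :=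
        Finset.single_le_sum (fun x _ => Nat.zero_le (u x)) hj₀mem

lemma run_spec (n : ℕ) : ∀ (N : ℕ) (s : (ℕ → ℕ) × (ℕ → ℕ)), IsSubexc n s.1 →
    (∀ k, s.2 k ≤ (capSet n s.1 k).card) → (∀ k, k = 0 ∨ n < k → s.2 k = 0) →
    (∑ j ∈ Finset.Icc 1 n, s.1 j) ≤ N →
    phi1Step n (phi1Iter n (N + 1) s) = none ∧
      IsSubexc n (phi1Iter n (N + 1) s).1 ∧
      (∀ k, (phi1Iter n (N + 1) s).2 k ≤ (capSet n (phi1Iter n (N + 1) s).1 k).card) ∧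
      (∀ k, k = 0 ∨ n < k → (phi1Iter n (N + 1) s).2 k = 0) := by
  intro N
  induction N with
  | zero =>
    intro s hu hw hw0 hsum
    have hnone : phi1Step n s = none := by
      apply step_none_of_empty
      intro hne
      have := sum_pos_of_nonempty n s.1 hne
      omega
    have hit : phi1Iter n 1 s = s := by
      rw [phi1Iter, hnone]
    rw [hit, hnone]
    exact ⟨rfl, hu, hw, hw0⟩
  | succ N ih =>
    intro s hu hw hw0 hsum
    by_cases hne : (pivotPositions n s.1).Nonempty
    · obtain ⟨u', w', hstep, hu', hw', hw0', hsum'⟩ :=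
        step_spec n s.1 s.2 hu hw hne
      have hstep2 : phi1Step n s = some (u', w') := by
        rw [← hstep]
      have hit : phi1Iter n (N + 1 + 1) s = phi1Iter n (N + 1) (u', w') := by
        rw [phi1Iter, hstep2]
      rw [hit]
      refine ih (u', w') hu' hw' (fun k hk => (hw0' k hk).trans (hw0 k hk)) ?_
      show (∑ j ∈ Finset.Icc 1 n, u' j) ≤ N
      omega
    · have hnone : phi1Step n s = none := step_none_of_empty n s hne
      have hit : phi1Iter n (N + 1 + 1) s = s := by
        rw [phi1Iter, hnone]
      rw [hit, hnone]
      exact ⟨rfl, hu, hw, hw0⟩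

/-! ### The bijection φ₂ -/

/-- The sorting algorithm φ₁ terminates on every subexcedent function `u` of size `n`
(iterating its elementary step eventually reaches a state with no pivot), and its output
`φ₁(u) = (v, w)` is a decreasing subexcedent function `v` together with a valid
weight `w` for `v`. -/
theorem phi1_terminates_welldefined (n : ℕ) (u : ℕ → ℕ) (hu : IsSubexc n u) :
    (∃ m, phi1Step n (phi1Iter n m (u, fun _ => 0)) = none) ∧
    IsSubexc n (phi1 n u).1 ∧ IsDecr n (phi1 n u).1 ∧
    IsValidW n (phi1 n u).1 (phi1 n u).2 := by
  have h0 : ∀ k : ℕ, (fun _ : ℕ => 0) k ≤ (capSet n u k).card := fun k => Nat.zero_le _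
  have h00 : ∀ k : ℕ, k = 0 ∨ n < k → (fun _ : ℕ => 0) k = 0 := fun k _ => rfl
  obtain ⟨hnone, hsub, hwle, hw0⟩ :=
    run_spec n (∑ j ∈ Finset.Icc 1 n, u j) (u, fun _ => 0) hu h0 h00 le_rfl
  have hphi : phi1 n u = phi1Iter n ((∑ j ∈ Finset.Icc 1 n, u j) + 1) (u, fun _ => 0) := rfl
  rw [← hphi] at hnone hsub hwle hw0
  have hemp : ¬(pivotPositions n (phi1 n u).1).Nonempty :=
    empty_of_step_none n _ hnone
  refine ⟨⟨(∑ j ∈ Finset.Icc 1 n, u j) + 1, by rw [← hphi]; exact hnone⟩,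
    hsub, ?_, ?_, ?_⟩
  · -- decreasing
    intro a b ha hab hbn hpos_a hpos_b
    by_contra hcon
    push_neg at hcon
    apply hemp
    exact ⟨b, mem_pivotPositions.mpr ⟨⟨by omega, hbn⟩, a, ha, hab, hpos_a, hcon⟩⟩
  · -- valid weight
    intro kk h1 h2
    refine (hwle kk).trans ?_
    calc (capSet n (phi1 n u).1 kk).card
        ≤ ((Finset.Ico 1 kk).filter (fun j => 0 < (phi1 n u).1 j ∧
            (phi1 n u).1 j ≤ n - kk ∧ pv n (phi1 n u).1 ≤ (phi1 n u).1 j ∧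
            (phi1 n u).1 kk < (phi1 n u).1 j)).card := Finset.card_image_le
      _ ≤ maxW n (phi1 n u).1 kk := by
          apply Finset.card_le_card
          intro x hx
          rw [Finset.mem_filter] at hx ⊢
          exact ⟨hx.1, hx.2.1, hx.2.2.1⟩
  · exact hw0
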